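/- Let n ≥ 5 and let F be a 5-antichain saturated family of subsets of [n]. Then there is no i with 1 ≤ i ≤ n − 1 such that F contains exactly one set of size i. -/

import Mathlib

open Finset

/-- A family `F` of finite subsets of ℕ contains a `k`-antichain: there are `k` sets in `F`
that are pairwise incomparable under inclusion. -/
def ContainsAntichain (k : ℕ) (F : Finset (Finset ℕ)) : Prop :=
  ∃ S ⊆ F, S.card = k ∧ ∀ A ∈ S, ∀ B ∈ S, A ≠ B → ¬ A ⊆ B

/-- `F` is a `k`-antichain saturated family of subsets of `[n] = {1, …, n}`:
all members are subsets of `[n]`, `F` contains no `k`-antichain, but adding any new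
subset of `[n]` creates a `k`-antichain. -/
def IsAntichainSaturated (n k : ℕ) (F : Finset (Finset ℕ)) : Prop :=
  (∀ A ∈ F, A ⊆ Finset.Icc 1 n) ∧
  ¬ ContainsAntichain k F ∧
  ∀ X ⊆ Finset.Icc 1 n, X ∉ F → ContainsAntichain k (insert X F)


/-- `A` is an antichain contained in `P` (under `⊆`). -/
def ACin (P A : Finset (Finset ℕ)) : Prop :=
  A ⊆ P ∧ ∀ a ∈ A, ∀ b ∈ A, a ≠ b → ¬ a ⊆ b

/-- `C` is a chain under `⊆`. -/
def IsChainF (C : Finset (Finset ℕ)) : Prop :=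
  ∀ a ∈ C, ∀ b ∈ C, a ⊆ b ∨ b ⊆ a

/-- The width of `P`: the maximum size of an antichain in `P`. -/
noncomputable def maxW (P : Finset (Finset ℕ)) : ℕ :=
  (P.powerset.filter (fun A => ∀ a ∈ A, ∀ b ∈ A, a ≠ b → ¬ a ⊆ b)).sup Finset.card

lemma ACin.card_le_maxW {P A : Finset (Finset ℕ)} (h : ACin P A) : A.card ≤ maxW P :=
  Finset.le_sup (mem_filter.2 ⟨mem_powerset.2 h.1, h.2⟩)

lemma exists_max_ac (P : Finset (Finset ℕ)) : ∃ A, ACin P A ∧ A.card = maxW P := by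
  obtain ⟨A, hA, hcard⟩ := Finset.exists_mem_eq_sup
    (P.powerset.filter (fun A => ∀ a ∈ A, ∀ b ∈ A, a ≠ b → ¬ a ⊆ b))
    ⟨∅, by simp⟩ Finset.card
  rw [mem_filter, mem_powerset] at hA
  exact ⟨A, ⟨hA.1, hA.2⟩, hcard.symm⟩

lemma maxW_mono {P Q : Finset (Finset ℕ)} (h : P ⊆ Q) : maxW P ≤ maxW Q := by
  obtain ⟨A, hA, hcard⟩ := exists_max_ac P
  rw [← hcard]
  exact ACin.card_le_maxW ⟨hA.1.trans h, hA.2⟩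

lemma maxW_pos {P : Finset (Finset ℕ)} (h : P.Nonempty) : 1 ≤ maxW P := by
  obtain ⟨x, hx⟩ := h
  have : ACin P {x} := ⟨by simpa using hx, by simp⟩
  simpa using this.card_le_maxW

lemma chain_top {C : Finset (Finset ℕ)} (hC : IsChainF C) (hne : C.Nonempty) :
    ∃ t ∈ C, ∀ x ∈ C, x ⊆ t := by
  obtain ⟨t, htC, hmax⟩ := C.exists_maximal hne
  refine ⟨t, htC, fun x hx => ?_⟩
  rcases hC x hx t htC with h | h
  · exact h
  · by_cases hxt : t = x
    · exact hxt.ge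
    · exact hmax hx h

lemma chain_bot {C : Finset (Finset ℕ)} (hC : IsChainF C) (hne : C.Nonempty) :
    ∃ t ∈ C, ∀ x ∈ C, t ⊆ x := by
  obtain ⟨t, htC, hmin⟩ := C.exists_minimal hne
  refine ⟨t, htC, fun x hx => ?_⟩
  rcases hC x hx t htC with h | h
  · by_cases hxt : x = t
    · exact hxt.ge
    · exact hmin hx h
  · exact h

lemma chain_inter_ac {C A : Finset (Finset ℕ)} (hC : IsChainF C)
    (hA : ∀ a ∈ A, ∀ b ∈ A, a ≠ b → ¬ a ⊆ b) : (A ∩ C).card ≤ 1 := by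
  rw [Finset.card_le_one]
  intro a ha b hb
  rw [mem_inter] at ha hb
  by_contra hne
  rcases hC a ha.2 b hb.2 with h | h
  · exact hA a ha.1 b hb.1 hne h
  · exact hA b hb.1 a ha.1 (Ne.symm hne) h

lemma list_sum_le_length (l : List ℕ) (h : ∀ x ∈ l, x ≤ 1) : l.sum ≤ l.length := by
  induction l with
  | nil => simp
  | cons y t ih =>
    simp only [List.sum_cons, List.length_cons]
    have := h y (List.mem_cons_self)
    have := ih (fun x hx => h x (List.mem_cons_of_mem _ hx))
    omega

lemma list_sum_lt (l : List ℕ) (h : ∀ x ∈ l, x ≤ 1) (h0 : 0 ∈ l) :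
    l.sum + 1 ≤ l.length := by
  induction l with
  | nil => simp at h0
  | cons y t ih =>
    simp only [List.sum_cons, List.length_cons]
    rcases List.mem_cons.1 h0 with h0 | h0
    · have := list_sum_le_length t (fun x hx => h x (List.mem_cons_of_mem _ hx))
      omega
    · have := ih (fun x hx => h x (List.mem_cons_of_mem _ hx)) h0
      have := h y (List.mem_cons_self)
      omega

lemma card_le_cover_sum (A : Finset (Finset ℕ)) (l : List (Finset (Finset ℕ)))
    (hcov : ∀ x ∈ A, ∃ C ∈ l, x ∈ C) :
    A.card ≤ (l.map fun C => (A ∩ C).card).sum := by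
  induction l generalizing A with
  | nil =>
    have : A = ∅ := by
      rw [eq_empty_iff_forall_notMem]
      intro x hx
      obtain ⟨C, hC, _⟩ := hcov x hx
      simp at hC
    simp [this]
  | cons C t ih =>
    have h1 : (A ∩ C).card + (A \ C).card = A.card := Finset.card_inter_add_card_sdiff A C
    have h2 : (A \ C).card ≤ (t.map fun C' => ((A \ C) ∩ C').card).sum := by
      apply ih
      intro x hx
      rw [mem_sdiff] at hx
      obtain ⟨C', hC', hxC'⟩ := hcov x hx.1
      rcases List.mem_cons.1 hC' with rfl | hC'
      · exact absurd hxC' hx.2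
      · exact ⟨C', hC', hxC'⟩
    have h3 : (t.map fun C' => ((A \ C) ∩ C').card).sum ≤
        (t.map fun C' => (A ∩ C').card).sum := by
      apply List.sum_le_sum
      intro C' hC'
      exact Finset.card_le_card (by
        intro x hx; rw [mem_inter] at hx ⊢; exact ⟨(mem_sdiff.1 hx.1).1, hx.2⟩)
    simp only [List.map_cons, List.sum_cons]
    omega

lemma entry_meets {A : Finset (Finset ℕ)} {l : List (Finset (Finset ℕ))}
    (hcov : ∀ x ∈ A, ∃ C ∈ l, x ∈ C) (hch : ∀ C ∈ l, IsChainF C)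
    (hA : ∀ a ∈ A, ∀ b ∈ A, a ≠ b → ¬ a ⊆ b) (hlen : l.length ≤ A.card)
    {C : Finset (Finset ℕ)} (hC : C ∈ l) : (A ∩ C).Nonempty := by
  rw [Finset.nonempty_iff_ne_empty]
  intro hemp
  have hterms : ∀ y ∈ (l.map fun C' => (A ∩ C').card), y ≤ 1 := by
    intro y hy
    obtain ⟨C', hC', rfl⟩ := List.mem_map.1 hy
    exact chain_inter_ac (hch C' hC') hA
  have h0 : 0 ∈ (l.map fun C' => (A ∩ C').card) := by
    apply List.mem_map.2
    exact ⟨C, hC, by rw [hemp]; simp⟩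
  have hs := list_sum_lt _ hterms h0
  have hc := card_le_cover_sum A l hcov
  rw [List.length_map] at hs
  omega

theorem dilworth : ∀ (m : ℕ) (P : Finset (Finset ℕ)), P.card ≤ m →
    ∃ l : List (Finset (Finset ℕ)),
      l.length ≤ maxW P ∧ (∀ C ∈ l, C ⊆ P ∧ IsChainF C) ∧
      (∀ x ∈ P, ∃ C ∈ l, x ∈ C) ∧ l.Pairwise Disjoint := by
  intro m
  induction m with
  | zero =>
    intro P hP
    have : P = ∅ := Finset.card_eq_zero.1 (Nat.le_zero.1 hP)
    subst this
    exact ⟨[], by simp, by simp, by simp, by simp⟩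
  | succ m ih =>
    intro P hP
    classical
    rcases P.eq_empty_or_nonempty with rfl | hne
    · exact ⟨[], by simp, by simp, by simp, by simp⟩
    obtain ⟨a, haP, hamax⟩ := P.exists_maximal hne
    set P' := P.erase a with hP'def
    have haP' : a ∉ P' := Finset.notMem_erase a P
    have hP'sub : P' ⊆ P := Finset.erase_subset a P
    have hP'card : P'.card ≤ m := by
      rw [hP'def, Finset.card_erase_of_mem haP]
      have := Finset.card_pos.2 hne
      omega
    rcases P'.eq_empty_or_nonempty with hP'e | hP'ne
    · -- P = {a}
      have hPa : P = {a} := by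
        apply Finset.eq_singleton_iff_unique_mem.2
        refine ⟨haP, fun x hx => ?_⟩
        by_contra hxa
        have hx' : x ∈ P' := Finset.mem_erase.2 ⟨hxa, hx⟩
        rw [hP'e] at hx'
        simp at hx'
      refine ⟨[{a}], ?_, ?_, ?_, ?_⟩
      · simpa using maxW_pos hne
      · intro C hC
        simp only [List.mem_singleton] at hC
        subst hC
        exact ⟨by simp [hPa], by intro x hx y hy; simp at hx hy; subst hx; subst hy; left; rfl⟩
      · intro x hx
        rw [hPa] at hx
        simp at hx
        exact ⟨{a}, by simp, by simp [hx]⟩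
      · simp
    obtain ⟨l', hlen', hch', hcov', hdisj'⟩ := ih P' hP'card
    have hgetmem : ∀ i : Fin l'.length, l'.get i ∈ l' := fun i => l'.get_mem i
    obtain ⟨Astar, hAstar, hAcard⟩ := exists_max_ac P'
    have hw1 : 1 ≤ maxW P' := maxW_pos hP'ne
    -- each entry of l' meets every maximum antichain of P'
    have hmeet : ∀ C ∈ l', ∀ A, ACin P' A → A.card = maxW P' → (A ∩ C).Nonempty := by
      intro C hC A hA hAc
      refine entry_meets (fun x hx => hcov' x (hA.1 hx)) (fun C' hC' => (hch' C' hC').2)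
        hA.2 ?_ hC
      rw [hAc]; exact hlen'
    -- choose the top "max-antichain" element of each chain
    have hts : ∀ i : Fin l'.length, ∃ t,
        (t ∈ l'.get i ∧ ∃ A, ACin P' A ∧ A.card = maxW P' ∧ t ∈ A) ∧
        ∀ x ∈ l'.get i, (∃ A, ACin P' A ∧ A.card = maxW P' ∧ x ∈ A) → x ⊆ t := by
      intro i
      set B := (l'.get i).filter (fun x => ∃ A, ACin P' A ∧ A.card = maxW P' ∧ x ∈ A) with hB
      have hBchain : IsChainF B := by
        intro x hx y hy
        exact (hch' _ (hgetmem i)).2 x (mem_filter.1 hx).1 y (mem_filter.1 hy).1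
      have hBne : B.Nonempty := by
        obtain ⟨z, hz⟩ := hmeet (l'.get i) (hgetmem i) Astar hAstar hAcard
        rw [mem_inter] at hz
        exact ⟨z, mem_filter.2 ⟨hz.2, Astar, hAstar, hAcard, hz.1⟩⟩
      obtain ⟨t, htB, htop⟩ := chain_top hBchain hBne
      rw [mem_filter] at htB
      exact ⟨t, ⟨htB.1, htB.2⟩, fun x hx hx2 => htop x (mem_filter.2 ⟨hx, hx2⟩)⟩
    choose t ht using hts
    have htmem : ∀ i, t i ∈ l'.get i := fun i => (ht i).1.1
    have htP' : ∀ i, t i ∈ P' := fun i => ((hch' _ (hgetmem i)).1) (htmem i)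
    have htdisj : ∀ i j : Fin l'.length, i ≠ j → Disjoint (l'.get i) (l'.get j) := by
      intro i j hij
      rcases lt_or_gt_of_ne hij with h | h
      · exact List.pairwise_iff_get.1 hdisj' i j h
      · exact (List.pairwise_iff_get.1 hdisj' j i h).symm
    have htne : ∀ i j : Fin l'.length, i ≠ j → t i ≠ t j := by
      intro i j hij heq
      exact Finset.disjoint_left.1 (htdisj i j hij) (htmem i) (heq ▸ htmem j)
    have hT_incomp : ∀ i j : Fin l'.length, i ≠ j → ¬ t i ⊆ t j := by
      intro i j hij hsub
      obtain ⟨Aj, hAj, hAjc, htjAj⟩ := (ht j).1.2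
      obtain ⟨y, hy⟩ := hmeet (l'.get i) (hgetmem i) Aj hAj hAjc
      rw [mem_inter] at hy
      have hyti : y ⊆ t i := (ht i).2 y hy.2 ⟨Aj, hAj, hAjc, hy.1⟩
      have hyne : y ≠ t j := by
        intro heq
        exact Finset.disjoint_left.1 (htdisj i j hij) (heq ▸ hy.2) (htmem j)
      exact hAj.2 y hy.1 (t j) htjAj hyne (hyti.trans hsub)
    by_cases hcase : ∃ i, t i ⊆ a
    · -- remove a chain through `a`, recurse
      obtain ⟨i0, hi0⟩ := hcase
      set K := ((l'.get i0).filter (· ⊆ t i0)) ∪ {a} with hK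
      have haK : a ∈ K := by simp [hK]
      have hKsubP : K ⊆ P := by
        intro x hx
        rcases mem_union.1 hx with hx | hx
        · exact hP'sub ((hch' _ (hgetmem i0)).1 (mem_filter.1 hx).1)
        · simp only [mem_singleton] at hx; subst hx; exact haP
      have hKchain : IsChainF K := by
        intro x hx y hy
        rcases mem_union.1 hx with hx | hx <;> rcases mem_union.1 hy with hy | hy
        · exact (hch' _ (hgetmem i0)).2 x (mem_filter.1 hx).1 y (mem_filter.1 hy).1
        · obtain ⟨hx1, hx2⟩ := mem_filter.1 hx
          rw [mem_singleton] at hy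
          rw [hy]
          exact Or.inl (subset_trans hx2 hi0)
        · obtain ⟨hy1, hy2⟩ := mem_filter.1 hy
          rw [mem_singleton] at hx
          rw [hx]
          exact Or.inr (subset_trans hy2 hi0)
        · rw [mem_singleton] at hx hy
          rw [hx, hy]
          exact Or.inl le_rfl
      set P'' := P \ K with hP''
      have hP''card : P''.card ≤ m := by
        have hss : P'' ⊆ P.erase a := by
          intro x hx
          rw [mem_sdiff] at hx
          exact Finset.mem_erase.2 ⟨fun h => hx.2 (h ▸ haK), hx.1⟩
        have h1 := Finset.card_le_card hss
        have h2 : (P.erase a).card = P.card - 1 := Finset.card_erase_of_mem haP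
        have h3 := Finset.card_pos.2 hne
        omega
      have hP''w : maxW P'' + 1 ≤ maxW P' := by
        obtain ⟨A'', hA'', hA''c⟩ := exists_max_ac P''
        have hsubP' : A'' ⊆ P' := by
          intro x hx
          have hx' := hA''.1 hx
          rw [hP'', mem_sdiff] at hx'
          exact Finset.mem_erase.2 ⟨fun h => hx'.2 (h ▸ haK), hx'.1⟩
        have hACP' : ACin P' A'' := ⟨hsubP', hA''.2⟩
        have hle : A''.card ≤ maxW P' := hACP'.card_le_maxW
        have hneq : A''.card ≠ maxW P' := by
          intro heq
          obtain ⟨z, hz⟩ := hmeet (l'.get i0) (hgetmem i0) A'' hACP' heq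
          rw [mem_inter] at hz
          have hzti : z ⊆ t i0 := (ht i0).2 z hz.2 ⟨A'', hACP', heq, hz.1⟩
          have hzK : z ∈ K := mem_union.2 (Or.inl (mem_filter.2 ⟨hz.2, hzti⟩))
          have := hA''.1 hz.1
          rw [hP'', mem_sdiff] at this
          exact this.2 hzK
        omega
      obtain ⟨l'', hlen'', hch'', hcov'', hdisj''⟩ := ih P'' hP''card
      refine ⟨l'' ++ [K], ?_, ?_, ?_, ?_⟩
      · rw [List.length_append, List.length_singleton]
        have := maxW_mono hP'sub
        omega
      · intro C hC
        rcases List.mem_append.1 hC with hC | hC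
        · exact ⟨(hch'' C hC).1.trans (Finset.sdiff_subset), (hch'' C hC).2⟩
        · simp only [List.mem_singleton] at hC; subst hC
          exact ⟨hKsubP, hKchain⟩
      · intro x hx
        by_cases hxK : x ∈ K
        · exact ⟨K, List.mem_append.2 (Or.inr (by simp)), hxK⟩
        · obtain ⟨C, hC, hxC⟩ := hcov'' x (by rw [hP'', mem_sdiff]; exact ⟨hx, hxK⟩)
          exact ⟨C, List.mem_append.2 (Or.inl hC), hxC⟩
      · rw [List.pairwise_append]
        refine ⟨hdisj'', by simp, ?_⟩
        intro C hC C' hC'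
        simp only [List.mem_singleton] at hC'; subst hC'
        rw [Finset.disjoint_left]
        intro x hxC hxK
        have := (hch'' C hC).1 hxC
        rw [hP'', mem_sdiff] at this
        exact this.2 hxK
    · -- a incomparable to all t i : width grows
      push_neg at hcase
      have hta : ∀ i, ¬ a ⊆ t i := by
        intro i hsub
        have hne' : a ≠ t i := fun h => haP' (h ▸ htP' i)
        exact hne' (le_antisymm hsub (hamax (hP'sub (htP' i)) hsub))
      set T := (Finset.univ : Finset (Fin l'.length)).image t with hT
      have hTmem : ∀ x, x ∈ T ↔ ∃ i, t i = x := by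
        intro x; rw [hT]; simp
      have haT : a ∉ T := by
        rw [hTmem]
        rintro ⟨i, rfl⟩
        exact haP' (htP' i)
      have hTcard : T.card = l'.length := by
        rw [hT, Finset.card_image_of_injective _ (fun i j hij => by
          by_contra hne'
          exact htne i j hne' hij), Finset.card_univ, Fintype.card_fin]
      have hACP : ACin P (insert a T) := by
        constructor
        · intro x hx
          rcases mem_insert.1 hx with hxa | hxT
          · rw [hxa]; exact haP
          · obtain ⟨i, hi⟩ := (hTmem x).1 hxT
            rw [← hi]
            exact hP'sub (htP' i)
        · intro x hx y hy hxy hsub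
          rcases mem_insert.1 hx with hxa | hxT
          · rcases mem_insert.1 hy with hya | hyT
            · exact hxy (hxa.trans hya.symm)
            · obtain ⟨j, hj⟩ := (hTmem y).1 hyT
              rw [hxa, ← hj] at hsub
              exact hta j hsub
          · rcases mem_insert.1 hy with hya | hyT
            · obtain ⟨i, hi⟩ := (hTmem x).1 hxT
              rw [hya, ← hi] at hsub
              exact hcase i hsub
            · obtain ⟨i, hi⟩ := (hTmem x).1 hxT
              obtain ⟨j, hj⟩ := (hTmem y).1 hyT
              rw [← hi, ← hj] at hsub
              refine hT_incomp i j (fun h => hxy ?_) hsub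
              rw [← hi, ← hj, h]
      have hwP : l'.length + 1 ≤ maxW P := by
        have := hACP.card_le_maxW
        rwa [Finset.card_insert_of_notMem haT, hTcard] at this
      refine ⟨l' ++ [{a}], ?_, ?_, ?_, ?_⟩
      · rw [List.length_append, List.length_singleton]; omega
      · intro C hC
        rcases List.mem_append.1 hC with hC | hC
        · exact ⟨(hch' C hC).1.trans hP'sub, (hch' C hC).2⟩
        · simp only [List.mem_singleton] at hC; subst hC
          exact ⟨by simpa using haP,
            by intro x hx y hy; simp only [mem_singleton] at hx hy; subst hx; subst hy; exact Or.inl le_rfl⟩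
      · intro x hx
        by_cases hxa : x = a
        · exact ⟨{a}, List.mem_append.2 (Or.inr (by simp)), by simp [hxa]⟩
        · obtain ⟨C, hC, hxC⟩ := hcov' x (Finset.mem_erase.2 ⟨hxa, hx⟩)
          exact ⟨C, List.mem_append.2 (Or.inl hC), hxC⟩
      · rw [List.pairwise_append]
        refine ⟨hdisj', by simp, ?_⟩
        intro C hC C' hC'
        simp only [List.mem_singleton] at hC'; subst hC'
        rw [Finset.disjoint_right]
        intro x hx
        simp only [mem_singleton] at hx; subst hx
        exact fun h => haP' ((hch' C hC).1 h)

/-- Between `D ⊆ U` with `|D| < i < |U|` there are two distinct sets of size `i`. -/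
lemma twoY {D U : Finset ℕ} {i : ℕ} (hDU : D ⊆ U) (hd : D.card < i) (hu : i < U.card) :
    ∃ Y1 Y2 : Finset ℕ, Y1 ≠ Y2 ∧
      (D ⊆ Y1 ∧ Y1 ⊆ U ∧ Y1.card = i) ∧ (D ⊆ Y2 ∧ Y2 ⊆ U ∧ Y2.card = i) := by
  classical
  have hUD : (U \ D).card = U.card - D.card := Finset.card_sdiff_of_subset hDU
  have hle : (i - D.card) + 1 ≤ (U \ D).card := by omega
  obtain ⟨W, hWsub, hWcard⟩ := Finset.exists_subset_card_eq (s := U \ D) (n := (i - D.card) + 1) hle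
  have h2 : 1 < W.card := by omega
  obtain ⟨x, hx, y, hy, hxy⟩ := Finset.one_lt_card.1 h2
  have hdisj : ∀ V ⊆ W, Disjoint D V := by
    intro V hV
    exact Finset.disjoint_left.2 fun z hzD hzV =>
      (Finset.mem_sdiff.1 (hWsub (hV hzV))).2 hzD
  have hcard : ∀ z ∈ W, (D ∪ W.erase z).card = i := by
    intro z hz
    rw [Finset.card_union_of_disjoint (hdisj _ (Finset.erase_subset _ _)),
      Finset.card_erase_of_mem hz, hWcard]
    omega
  have hsubU : ∀ z, D ∪ W.erase z ⊆ U := by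
    intro z
    apply Finset.union_subset hDU
    exact (Finset.erase_subset _ _).trans (hWsub.trans Finset.sdiff_subset)
  refine ⟨D ∪ W.erase x, D ∪ W.erase y, ?_,
    ⟨Finset.subset_union_left, hsubU x, hcard x hx⟩,
    ⟨Finset.subset_union_left, hsubU y, hcard y hy⟩⟩
  intro heq
  have hxin : x ∈ D ∪ W.erase y := by
    apply Finset.mem_union_right
    exact Finset.mem_erase.2 ⟨hxy, hx⟩
  rw [← heq] at hxin
  rcases Finset.mem_union.1 hxin with h | h
  · exact (Finset.mem_sdiff.1 (hWsub hx)).2 h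
  · exact (Finset.mem_erase.1 h).1 rfl

/-- For `n ≥ 5` and `F` a 5-antichain saturated family of subsets of `[n]`, no level
`1 ≤ i ≤ n - 1` of `F` has exactly one set. -/
theorem five_saturated_no_level_one (n : ℕ) (hn : 5 ≤ n) (F : Finset (Finset ℕ))
    (hF : IsAntichainSaturated n 5 F) :
    ¬ ∃ i, 1 ≤ i ∧ i ≤ n - 1 ∧ (F.filter fun A => A.card = i).card = 1 := by
  classical
  rintro ⟨i, hi1, hi2, hlevel⟩
  obtain ⟨hsub, hno5, hsat⟩ := hF
  have hin : i < n := by omega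
  have hIcc : (Finset.Icc 1 n).card = n := by rw [Nat.card_Icc]; omega
  obtain ⟨S, hSeq⟩ := Finset.card_eq_one.1 hlevel
  have hSmem : S ∈ F.filter fun A => A.card = i := hSeq ▸ Finset.mem_singleton_self S
  rw [Finset.mem_filter] at hSmem
  obtain ⟨hSF, hSc⟩ := hSmem
  have huniq : ∀ A ∈ F, A.card = i → A = S := by
    intro A hA hAc
    have : A ∈ F.filter fun A => A.card = i := Finset.mem_filter.2 ⟨hA, hAc⟩
    rw [hSeq, Finset.mem_singleton] at this
    exact this
  -- the width of F is at most 4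
  have hW4 : maxW F ≤ 4 := by
    by_contra h
    push_neg at h
    obtain ⟨A, hA, hAc⟩ := exists_max_ac F
    obtain ⟨B, hBA, hBc⟩ := Finset.exists_subset_card_eq (s := A) (n := 5) (by omega)
    exact hno5 ⟨B, hBA.trans hA.1, hBc, fun a ha b hb => hA.2 a (hBA ha) b (hBA hb)⟩
  obtain ⟨l, hlen, hch, hcov, hdisj⟩ := dilworth F.card F le_rfl
  have hlen4 : l.length ≤ 4 := hlen.trans hW4
  -- for every candidate level-i set Y, a 4-antichain in F incomparable to Y
  have hAC : ∀ Y, Y ⊆ Finset.Icc 1 n → Y.card = i → Y ≠ S → ∃ A, A ⊆ F ∧ A.card = 4 ∧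
      (∀ a ∈ A, ∀ b ∈ A, a ≠ b → ¬ a ⊆ b) ∧ (∀ B ∈ A, ¬ B ⊆ Y ∧ ¬ Y ⊆ B) := by
    intro Y hYsub hYc hYS
    have hYF : Y ∉ F := fun h => hYS (huniq Y h hYc)
    obtain ⟨T5, hT5sub, hT5c, hT5p⟩ := hsat Y hYsub hYF
    have hYT5 : Y ∈ T5 := by
      by_contra hY
      refine hno5 ⟨T5, ?_, hT5c, hT5p⟩
      intro x hx
      rcases Finset.mem_insert.1 (hT5sub hx) with h | h
      · exact absurd (h ▸ hx) hY
      · exact h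
    refine ⟨T5.erase Y, ?_, ?_, ?_, ?_⟩
    · intro x hx
      rw [Finset.mem_erase] at hx
      rcases Finset.mem_insert.1 (hT5sub hx.2) with h | h
      · exact absurd h hx.1
      · exact h
    · rw [Finset.card_erase_of_mem hYT5, hT5c]
    · intro a ha b hb
      exact hT5p a (Finset.mem_erase.1 ha).2 b (Finset.mem_erase.1 hb).2
    · intro B hB
      rw [Finset.mem_erase] at hB
      exact ⟨hT5p B hB.2 Y hYT5 hB.1, hT5p Y hYT5 B hB.2 (Ne.symm hB.1)⟩
  -- every chain of the cover meets every such 4-antichain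
  have hmeets : ∀ (A : Finset (Finset ℕ)), A ⊆ F → A.card = 4 →
      (∀ a ∈ A, ∀ b ∈ A, a ≠ b → ¬ a ⊆ b) → ∀ C ∈ l, (A ∩ C).Nonempty := by
    intro A hAF hAc hAp C hC
    exact entry_meets (fun x hx => hcov x (hAF hx)) (fun C' hC' => (hch C' hC').2) hAp
      (by omega) hC
  -- the cover has at least two chains
  have hilt : i < (Finset.Icc 1 n).card := by omega
  have hemp : (∅ : Finset ℕ).card < i := by
    rw [Finset.card_empty]; omega
  obtain ⟨Z1, Z2, hZ12, ⟨_, hZ1U, hZ1c⟩, ⟨_, hZ2U, hZ2c⟩⟩ :=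
    twoY (Finset.empty_subset (Finset.Icc 1 n)) hemp hilt
  have hY0 : ∃ Y0, Y0 ⊆ Finset.Icc 1 n ∧ Y0.card = i ∧ Y0 ≠ S := by
    by_cases h1 : Z1 = S
    · exact ⟨Z2, hZ2U, hZ2c, fun h => hZ12 (h1.trans h.symm)⟩
    · exact ⟨Z1, hZ1U, hZ1c, h1⟩
  obtain ⟨Y0, hY0sub, hY0c, hY0S⟩ := hY0
  obtain ⟨A0, hA0F, hA0c, hA0p, _⟩ := hAC Y0 hY0sub hY0c hY0S
  have hlen_ge : 4 ≤ l.length := by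
    have hsum := card_le_cover_sum A0 l (fun x hx => hcov x (hA0F hx))
    have hterms : ∀ y ∈ (l.map fun C' => (A0 ∩ C').card), y ≤ 1 := by
      intro y hy
      obtain ⟨C', hC', rfl⟩ := List.mem_map.1 hy
      exact chain_inter_ac (hch C' hC').2 hA0p
    have hss := list_sum_le_length _ hterms
    rw [List.length_map] at hss
    omega
  -- pick a chain C of the cover not containing S
  have h01 : Disjoint (l.get ⟨0, by omega⟩) (l.get ⟨1, by omega⟩) :=
    List.pairwise_iff_get.1 hdisj ⟨0, by omega⟩ ⟨1, by omega⟩ (by simp)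
  have hCex : ∃ C ∈ l, S ∉ C := by
    by_cases h : S ∈ l.get ⟨0, by omega⟩
    · exact ⟨l.get ⟨1, by omega⟩, l.get_mem _, fun hS => Finset.disjoint_left.1 h01 h hS⟩
    · exact ⟨l.get ⟨0, by omega⟩, l.get_mem _, h⟩
  obtain ⟨C, hCl, hSC⟩ := hCex
  have hCF : C ⊆ F := (hch C hCl).1
  have hCchain : IsChainF C := (hch C hCl).2
  have hCi : ∀ B ∈ C, B.card ≠ i := by
    intro B hB hBc
    exact hSC ((huniq B (hCF hB) hBc) ▸ hB)
  -- U : lower bound for the part of C above level i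
  have hUex : ∃ U, U ⊆ Finset.Icc 1 n ∧ i < U.card ∧
      (∀ B ∈ C, i < B.card → U ⊆ B) ∧ (U ∈ C ∨ U = Finset.Icc 1 n) := by
    by_cases hHine : (C.filter fun B => i < B.card).Nonempty
    · have hHichain : IsChainF (C.filter fun B => i < B.card) := by
        intro a ha b hb
        exact hCchain a (Finset.mem_filter.1 ha).1 b (Finset.mem_filter.1 hb).1
      obtain ⟨U, hUHi, hUmin⟩ := chain_bot hHichain hHine
      obtain ⟨hUC, hUc⟩ := Finset.mem_filter.1 hUHi
      exact ⟨U, hsub U (hCF hUC), hUc,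
        fun B hB hBc => hUmin B (Finset.mem_filter.2 ⟨hB, hBc⟩), Or.inl hUC⟩
    · refine ⟨Finset.Icc 1 n, le_rfl, by omega, ?_, Or.inr rfl⟩
      intro B hB hBc
      exact absurd ⟨B, Finset.mem_filter.2 ⟨hB, hBc⟩⟩ hHine
  obtain ⟨U, hUIcc, hUc, hUmin, hUC⟩ := hUex
  -- D : upper bound for the part of C below level i
  have hDex : ∃ D, D ⊆ U ∧ D.card < i ∧ ∀ B ∈ C, B.card < i → B ⊆ D := by
    by_cases hLone : (C.filter fun B => B.card < i).Nonempty
    · have hLochain : IsChainF (C.filter fun B => B.card < i) := by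
        intro a ha b hb
        exact hCchain a (Finset.mem_filter.1 ha).1 b (Finset.mem_filter.1 hb).1
      obtain ⟨D, hDLo, hDmax⟩ := chain_top hLochain hLone
      obtain ⟨hDC, hDc⟩ := Finset.mem_filter.1 hDLo
      have hDU : D ⊆ U := by
        rcases hUC with hUC | hUC
        · rcases hCchain D hDC U hUC with h | h
          · exact h
          · have := Finset.card_le_card h
            omega
        · rw [hUC]
          exact hsub D (hCF hDC)
      exact ⟨D, hDU, hDc, fun B hB hBc => hDmax B (Finset.mem_filter.2 ⟨hB, hBc⟩)⟩
    · refine ⟨∅, Finset.empty_subset U, by rw [Finset.card_empty]; omega, ?_⟩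
      intro B hB hBc
      exact absurd ⟨B, Finset.mem_filter.2 ⟨hB, hBc⟩⟩ hLone
  obtain ⟨D, hDU, hDc, hDmax⟩ := hDex
  -- two distinct level-i sets between D and U; one of them differs from S
  obtain ⟨Y1, Y2, hY12, ⟨h1D, h1U, h1c⟩, ⟨h2D, h2U, h2c⟩⟩ := twoY hDU hDc hUc
  have hYex : ∃ Y, D ⊆ Y ∧ Y ⊆ U ∧ Y.card = i ∧ Y ≠ S := by
    by_cases h1 : Y1 = S
    · exact ⟨Y2, h2D, h2U, h2c, fun h => hY12 (h1.trans h.symm)⟩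
    · exact ⟨Y1, h1D, h1U, h1c, h1⟩
  obtain ⟨Y, hYD, hYU, hYc, hYS⟩ := hYex
  -- but every element of C is comparable with Y : contradiction
  obtain ⟨A, hAF, hAc, hAp, hAinc⟩ := hAC Y (hYU.trans hUIcc) hYc hYS
  obtain ⟨B, hB⟩ := hmeets A hAF hAc hAp C hCl
  rw [Finset.mem_inter] at hB
  obtain ⟨hBA, hBC⟩ := hB
  obtain ⟨hBY, hYB⟩ := hAinc B hBA
  rcases lt_or_gt_of_ne (hCi B hBC) with h | h
  · exact hBY ((hDmax B hBC h).trans hYD)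
  · exact hYB (hYU.trans (hUmin B hBC h))
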